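/- arXiv:2503.08971 — 2 statements merged into one kernel-verified Lean document; each statement's English description precedes it below -/
import Mathlib

section
/- Let V be a finite type and E a DAG on V. Let X, Y be distinct vertices and Z ⊆ V \ {X, Y} a set such that Z satisfies the adjustment criterion relative to ({X}, {Y}) and X is not an ancestor of any vertex of Z. Then Z is elementwise minimal for the adjustment criterion relative to ({X}, {Y}) (i.e. for every Z ∈ Z, the set Z \ {Z} does not satisfy the adjustment criterion relative to ({X}, {Y})) if and only if Z is minimal for the adjustment criterion relative to ({X}, {Y}) (i.e. no proper subset of Z satisfies the adjustment criterion relative to ({X}, {Y})). -/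
open scoped Classical

variable {V : Type*}

/-- `a` is an ancestor of `b` (every vertex is its own ancestor). -/
def Anc (E : V → V → Prop) (a b : V) : Prop := Relation.ReflTransGen E a b

/-- A path in a directed graph `E` from `a` to `b`: a sequence of distinct vertices
`a = vtx 0, …, vtx len = b` (`len ≥ 1`) in which consecutive vertices are joined
by an edge of `E` in either direction. -/
structure GPath (E : V → V → Prop) (a b : V) where
  len : ℕ
  len_pos : 0 < len
  vtx : ℕ → V
  first : vtx 0 = a
  last : vtx len = b
  inj : ∀ i j, i ≤ len → j ≤ len → vtx i = vtx j → i = j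
  adj : ∀ i, i < len → E (vtx i) (vtx (i + 1)) ∨ E (vtx (i + 1)) (vtx i)

namespace GPath

variable {E : V → V → Prop} {a b : V}

/-- The interior vertex at position `i` is a collider on the path. -/
def IsColliderAt (p : GPath E a b) (i : ℕ) : Prop :=
  0 < i ∧ i < p.len ∧ E (p.vtx (i - 1)) (p.vtx i) ∧ E (p.vtx (i + 1)) (p.vtx i)

/-- A path is open given `S` if no non-collider on it lies in `S` and every collider
on it has a descendant in `S`. -/
def OpenGiven (p : GPath E a b) (S : Set V) : Prop :=
  (∀ i, 0 < i → i < p.len → ¬ p.IsColliderAt i → p.vtx i ∉ S) ∧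
  (∀ i, p.IsColliderAt i → ∃ d ∈ S, Anc E (p.vtx i) d)

/-- A back-door path: the first edge points into the first vertex. -/
def IsBackdoor (p : GPath E a b) : Prop := E (p.vtx 1) (p.vtx 0)

/-- A causal (directed) path. -/
def Causal (p : GPath E a b) : Prop := ∀ i, i < p.len → E (p.vtx i) (p.vtx (i + 1))

/-- A path is proper with respect to `X` if only its first vertex lies in `X`. -/
def ProperFrom (p : GPath E a b) (X : Set V) : Prop :=
  ∀ i, 0 < i → i ≤ p.len → p.vtx i ∉ X

/-- The vertex `w` lies on the path. -/
def MemV (p : GPath E a b) (w : V) : Prop := ∃ i ≤ p.len, p.vtx i = w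

/-- The number of colliders on the path. -/
noncomputable def numColliders (p : GPath E a b) : ℕ := Set.ncard {i | p.IsColliderAt i}

end GPath

/-- `A` and `B` are d-separated given `S`: every path from `A` to `B` is blocked given `S`. -/
def DSep (E : V → V → Prop) (A B S : Set V) : Prop :=
  ∀ a ∈ A, ∀ b ∈ B, ∀ p : GPath E a b, ¬ p.OpenGiven S

/-- `A` and `B` are d-connected given `S`: some path from `A` to `B` is open given `S`. -/
def DConn (E : V → V → Prop) (A B S : Set V) : Prop :=
  ∃ a ∈ A, ∃ b ∈ B, ∃ p : GPath E a b, p.OpenGiven S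

/-- The set of descendants of a vertex set `S`. -/
def descendants (E : V → V → Prop) (S : Set V) : Set V := {d | ∃ s ∈ S, Anc E s d}

/-- `S` blocks every back-door path from `x` to `y`. -/
def BlocksBackdoor (E : V → V → Prop) (x y : V) (S : Set V) : Prop :=
  ∀ p : GPath E x y, p.IsBackdoor → ¬ p.OpenGiven S

/-- The back-door criterion for `Z` relative to `(X, Y)`. -/
def BackdoorCriterion (E : V → V → Prop) (X Y Z : Set V) : Prop :=
  Z ∩ descendants E X = ∅ ∧
  ∀ x ∈ X, ∀ y ∈ Y, BlocksBackdoor E x y (Z ∪ (X \ {x}))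

/-- The adjustment criterion for `Z` relative to `(X, Y)`: (a) `Z` contains no
descendant of any `w ∉ X` lying on a proper causal path from `X` to `Y`, and
(b) `Z` blocks every proper non-causal path from `X` to `Y`. -/
def AdjustmentCriterion (E : V → V → Prop) (X Y Z : Set V) : Prop :=
  (∀ w, w ∉ X →
      (∃ x ∈ X, ∃ y ∈ Y, ∃ p : GPath E x y, p.ProperFrom X ∧ p.Causal ∧ p.MemV w) →
      ∀ z ∈ Z, ¬ Anc E w z) ∧
  (∀ x ∈ X, ∀ y ∈ Y, ∀ p : GPath E x y, p.ProperFrom X → ¬ p.Causal → ¬ p.OpenGiven Z)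

structure Wk (E : V → V → Prop) (X Y : V) where
  len : ℕ
  len_pos : 0 < len
  vtx : ℕ → V
  first : vtx 0 = X
  last : vtx len = Y
  adj : ∀ i, i < len → E (vtx i) (vtx (i + 1)) ∨ E (vtx (i + 1)) (vtx i)

namespace Wk

variable {E : V → V → Prop} {X Y : V}

/-- Collider occurrence on a walk. -/
def Coll (w : Wk E X Y) (i : ℕ) : Prop :=
  0 < i ∧ i < w.len ∧ E (w.vtx (i - 1)) (w.vtx i) ∧ E (w.vtx (i + 1)) (w.vtx i)

/-- Anc is as in the problem file. -/
local notation "Anc'" => Relation.ReflTransGen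

/-- Goodness of a walk with respect to a pair of sets. -/
def Good (w : Wk E X Y) (Z' Z : Set V) : Prop :=
  E (w.vtx 1) (w.vtx 0) ∧
  (∀ i, 0 < i → i ≤ w.len → w.vtx i ≠ X) ∧
  (∀ i, i < w.len → w.vtx i ≠ Y) ∧
  (∀ i, 0 < i → i < w.len → ¬ w.Coll i → w.vtx i ∉ Z') ∧
  (∀ i, w.Coll i → ∃ d ∈ Z, Relation.ReflTransGen E (w.vtx i) d)

/-- Number of collider occurrences. -/
noncomputable def nc (w : Wk E X Y) : ℕ :=
  ((Finset.range (w.len + 1)).filter w.Coll).card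

end Wk

section Chains

variable {E : V → V → Prop}

theorem chain_of_anc {a b : V} (h : Relation.ReflTransGen E a b) :
    ∃ (m : ℕ) (u : ℕ → V), u 0 = a ∧ u m = b ∧ ∀ k < m, E (u k) (u (k + 1)) := by
  induction h using Relation.ReflTransGen.head_induction_on with
  | refl => exact ⟨0, fun _ => b, rfl, rfl, by omega⟩
  | head hac hcb ih =>
      obtain ⟨m, u, h0, hm, he⟩ := ih
      refine ⟨m + 1, fun k => if k = 0 then _ else u (k - 1), if_pos rfl, ?_, ?_⟩
      · simpa using hm
      · intro k hk
        rcases Nat.eq_zero_or_pos k with rfl | hk0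
        · simpa [h0] using hac
        · have h1 : ¬ (k = 0) := by omega
          have h2 : ¬ (k + 1 = 0) := by omega
          simp only [if_neg h1, if_neg h2]
          have : k - 1 + 1 = k + 1 - 1 := by omega
          rw [show k + 1 - 1 = k from by omega]
          have := he (k - 1) (by omega)
          rwa [show k - 1 + 1 = k from by omega] at this

theorem chain_transGen {m : ℕ} {u : ℕ → V} (he : ∀ k < m, E (u k) (u (k + 1))) :
    ∀ a b, a < b → b ≤ m → Relation.TransGen E (u a) (u b) := by
  intro a b
  induction b with
  | zero => omega
  | succ b ih =>
      intro hab hbm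
      rcases Nat.lt_or_ge a b with h | h
      · exact (ih h (by omega)).tail (he b (by omega))
      · have : a = b := by omega
        subst this
        exact Relation.TransGen.single (he a (by omega))

theorem chain_anc {m : ℕ} {u : ℕ → V} (he : ∀ k < m, E (u k) (u (k + 1))) :
    ∀ a b, a ≤ b → b ≤ m → Relation.ReflTransGen E (u a) (u b) := by
  intro a b hab hbm
  rcases Nat.lt_or_ge a b with h | h
  · exact (chain_transGen he a b h hbm).to_reflTransGen
  · have : a = b := by omega
    subst this; exact Relation.ReflTransGen.refl

end Chains

section Rays

variable {E : V → V → Prop} {X Y : V}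

/-- Following a forward edge along a walk until the end or the first collider. -/
theorem wkFwd (w : Wk E X Y) :
    ∀ t k, t = w.len - k → k < w.len → E (w.vtx k) (w.vtx (k + 1)) →
      ∃ l, k < l ∧ l ≤ w.len ∧ Relation.ReflTransGen E (w.vtx (k + 1)) (w.vtx l) ∧
        (l = w.len ∨ w.Coll l) ∧ (∀ s, k ≤ s → s < l → E (w.vtx s) (w.vtx (s + 1))) := by
  intro t
  induction t using Nat.strong_induction_on with
  | _ t ih =>
    intro k ht hk he
    by_cases hkl : k + 1 = w.len
    · refine ⟨k + 1, by omega, by omega, Relation.ReflTransGen.refl, Or.inl hkl, ?_⟩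
      intro s h1 h2
      have : s = k := by omega
      subst this; exact he
    · by_cases hc : E (w.vtx (k + 1 + 1)) (w.vtx (k + 1))
      · refine ⟨k + 1, by omega, by omega, Relation.ReflTransGen.refl, Or.inr ?_, ?_⟩
        · exact ⟨by omega, by omega, by rwa [show k + 1 - 1 = k from by omega], hc⟩
        · intro s h1 h2
          have : s = k := by omega
          subst this; exact he
      · have he2 : E (w.vtx (k + 1)) (w.vtx (k + 1 + 1)) :=
          (w.adj (k + 1) (by omega)).resolve_right hc
        obtain ⟨l, hl1, hl2, hanc, hend, hchain⟩ :=
          ih (w.len - (k + 1)) (by omega) (k + 1) rfl (by omega) he2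
        refine ⟨l, by omega, hl2, Relation.ReflTransGen.head he2 hanc, hend, ?_⟩
        intro s h1 h2
        rcases Nat.eq_or_lt_of_le h1 with rfl | h1'
        · exact he
        · exact hchain s (by omega) h2

/-- Following a backward edge along a walk until the start or the first collider. -/
theorem wkBwd (w : Wk E X Y) :
    ∀ k, k < w.len → E (w.vtx (k + 1)) (w.vtx k) →
      ∃ l, l ≤ k ∧ Relation.ReflTransGen E (w.vtx k) (w.vtx l) ∧ (l = 0 ∨ w.Coll l) := by
  intro k
  induction k using Nat.strong_induction_on with
  | _ k ih =>
    intro hk he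
    rcases Nat.eq_zero_or_pos k with rfl | hk0
    · exact ⟨0, le_refl _, Relation.ReflTransGen.refl, Or.inl rfl⟩
    · by_cases hc : E (w.vtx (k - 1)) (w.vtx k)
      · exact ⟨k, le_refl _, Relation.ReflTransGen.refl, Or.inr ⟨hk0, hk, hc, he⟩⟩
      · have hadj := w.adj (k - 1) (by omega)
        rw [show k - 1 + 1 = k from by omega] at hadj
        have he2 : E (w.vtx k) (w.vtx (k - 1)) := hadj.resolve_left hc
        obtain ⟨l, hl1, hanc, hend⟩ := ih (k - 1) (by omega) (by omega)
          (by rwa [show k - 1 + 1 = k from by omega])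
        exact ⟨l, by omega, Relation.ReflTransGen.head he2 hanc, hend⟩

end Rays

section Shortcut

variable {E : V → V → Prop} {X Y : V} {Z' Z : Set V}

theorem shortcut (hdag : Irreflexive (Relation.TransGen E)) (hXY : X ≠ Y)
    (w : Wk E X Y) (hw : w.Good Z' Z) {i j : ℕ} (hij : i < j) (hjl : j ≤ w.len)
    (heq : w.vtx i = w.vtx j) :
    ∃ w' : Wk E X Y, w'.Good Z' Z ∧ w'.nc ≤ w.nc ∧ w'.len < w.len := by
  obtain ⟨hb, hX, hY, hN, hC⟩ := hw
  have antis : ∀ {a b : V}, E a b → E b a → False := fun h1 h2 =>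
    hdag _ ((Relation.TransGen.single h1).tail h2)
  have hi1 : 1 ≤ i := by
    rcases Nat.eq_zero_or_pos i with rfl | h
    · exact absurd (heq.symm.trans w.first) (hX j (by omega) hjl)
    · exact h
  have hjlt : j < w.len := by
    rcases Nat.eq_or_lt_of_le hjl with rfl | h
    · exact absurd (heq.trans w.last) (hY i (by omega))
    · exact h
  set D := j - i with hD
  set w' : Wk E X Y :=
    { len := w.len - D
      len_pos := by omega
      vtx := fun k => if k ≤ i then w.vtx k else w.vtx (k + D)
      first := by simp [w.first]
      last := by
        rw [if_neg (by omega), show w.len - D + D = w.len from by omega]; exact w.last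
      adj := by
        intro k hk
        by_cases h1 : k < i
        · rw [if_pos (by omega : k ≤ i), if_pos (by omega : k + 1 ≤ i)]
          exact w.adj k (by omega)
        · by_cases h2 : k = i
          · rw [if_pos (by omega : k ≤ i), if_neg (by omega : ¬ k + 1 ≤ i), h2, heq,
              show i + 1 + D = j + 1 from by omega]
            exact w.adj j (by omega)
          · rw [if_neg (by omega), if_neg (by omega)]
            have := w.adj (k + D) (by omega)
            rwa [show k + D + 1 = k + 1 + D from by omega] at this } with hw'
  have hvle : ∀ k, k ≤ i → w'.vtx k = w.vtx k := fun k hk => if_pos hk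
  have hvgt : ∀ k, i < k → w'.vtx k = w.vtx (k + D) := fun k hk => if_neg (by omega)
  have hvi : w'.vtx i = w.vtx j := (hvle i (Nat.le_refl i)).trans heq
  have hlen' : w'.len = w.len - D := rfl
  -- collider status transfer away from the junction
  have hcoll_lt : ∀ k, k < i → (w'.Coll k ↔ w.Coll k) := by
    intro k hk
    unfold Wk.Coll
    rw [hvle k hk.le, hvle (k - 1) (by omega), hvle (k + 1) (by omega), hlen']
    constructor
    · rintro ⟨h1, h2, h3, h4⟩; exact ⟨h1, by omega, h3, h4⟩
    · rintro ⟨h1, h2, h3, h4⟩; exact ⟨h1, by omega, h3, h4⟩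
  have hcoll_gt : ∀ k, i < k → (w'.Coll k ↔ w.Coll (k + D)) := by
    intro k hk
    unfold Wk.Coll
    have e1 : w'.vtx (k - 1) = w.vtx (k + D - 1) := by
      rcases Nat.eq_or_lt_of_le (by omega : i ≤ k - 1) with h | h
      · rw [hvle (k - 1) (by omega), ← h, heq]
        congr 1; omega
      · rw [hvgt (k - 1) h]; congr 1; omega
    have e2 : w'.vtx (k + 1) = w.vtx (k + D + 1) := by
      rw [hvgt (k + 1) (by omega)]; congr 1; omega
    rw [hvgt k hk, e1, e2, hlen']
    constructor
    · rintro ⟨h1, h2, h3, h4⟩; exact ⟨by omega, by omega, h3, h4⟩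
    · rintro ⟨h1, h2, h3, h4⟩; exact ⟨by omega, by omega, h3, h4⟩
  -- the junction: if it is a collider in w', it has an Anc-witness collider of w in [i,j]
  have hAi : w'.Coll i → ∃ k₀, i ≤ k₀ ∧ k₀ ≤ j ∧ w.Coll k₀ ∧
      Relation.ReflTransGen E (w'.vtx i) (w.vtx k₀) := by
    rintro ⟨h0, hlt, hL, hR⟩
    rw [hvle (i - 1) (by omega), hvle i (Nat.le_refl i)] at hL
    rw [hvgt (i + 1) (by omega), hvi, show i + 1 + D = j + 1 from by omega] at hR
    by_cases hc : E (w.vtx (i + 1)) (w.vtx i)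
    · exact ⟨i, le_refl _, by omega, ⟨by omega, by omega, hL, hc⟩,
        (hvle i (Nat.le_refl i)) ▸ Relation.ReflTransGen.refl⟩
    · have hf : E (w.vtx i) (w.vtx (i + 1)) := (w.adj i (by omega)).resolve_right hc
      obtain ⟨l, hl1, hl2, hanc, hend, hchain⟩ := wkFwd w (w.len - i) i rfl (by omega) hf
      by_cases hlj : l ≤ j
      · have hcl : w.Coll l := by
          rcases hend with rfl | h
          · omega
          · exact h
        refine ⟨l, by omega, hlj, hcl, ?_⟩
        rw [hvle i (Nat.le_refl i)]
        exact Relation.ReflTransGen.head hf hanc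
      · exfalso
        exact antis (hchain j (by omega) (by omega)) (heq ▸ hR)
  -- the junction: if it is a non-collider in w', its vertex avoids Z'
  have hBi : ¬ w'.Coll i → w'.vtx i ∉ Z' := by
    intro hnc
    have h1 : ¬ (E (w.vtx (i - 1)) (w.vtx i) ∧ E (w.vtx (j + 1)) (w.vtx j)) := by
      intro ⟨hL, hR⟩
      apply hnc
      refine ⟨by omega, by omega, ?_, ?_⟩
      · rwa [hvle (i - 1) (by omega), hvle i (Nat.le_refl i)]
      · rw [hvgt (i + 1) (by omega), hvi, show i + 1 + D = j + 1 from by omega]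
        exact hR
    rw [hvle i (Nat.le_refl i)]
    by_cases hL : E (w.vtx (i - 1)) (w.vtx i)
    · have hR : ¬ E (w.vtx (j + 1)) (w.vtx j) := fun h => h1 ⟨hL, h⟩
      have : ¬ w.Coll j := fun h => hR h.2.2.2
      rw [heq]
      exact hN j (by omega) (by omega) this
    · have : ¬ w.Coll i := fun h => hL h.2.2.1
      exact hN i (by omega) (by omega) this
  refine ⟨w', ⟨?_, ?_, ?_, ?_, ?_⟩, ?_, by rw [hlen']; omega⟩
  · rw [hvle 1 hi1, hvle 0 (by omega)]; exact hb
  · intro k hk0 hkl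
    by_cases hk : k ≤ i
    · rw [hvle k hk]; exact hX k hk0 (by omega)
    · rw [hvgt k (by omega)]; exact hX (k + D) (by omega) (by rw [hlen'] at hkl; omega)
  · intro k hkl
    by_cases hk : k ≤ i
    · rw [hvle k hk]; exact hY k (by omega)
    · rw [hvgt k (by omega)]; exact hY (k + D) (by rw [hlen'] at hkl; omega)
  · intro k hk0 hkl hnc
    rcases Nat.lt_trichotomy k i with h | rfl | h
    · rw [hvle k h.le]
      exact hN k hk0 (by omega) (fun hc => hnc ((hcoll_lt k h).2 hc))
    · exact hBi hnc
    · rw [hvgt k h]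
      exact hN (k + D) (by omega) (by rw [hlen'] at hkl; omega)
        (fun hc => hnc ((hcoll_gt k h).2 hc))
  · intro k hc
    rcases Nat.lt_trichotomy k i with h | rfl | h
    · rw [hvle k h.le]; exact hC k ((hcoll_lt k h).1 hc)
    · obtain ⟨k₀, _, _, hck, hanc⟩ := hAi hc
      obtain ⟨d, hd, hanc2⟩ := hC k₀ hck
      exact ⟨d, hd, hanc.trans hanc2⟩
    · rw [hvgt k h]; exact hC (k + D) ((hcoll_gt k h).1 hc)
  · -- the collider count does not increase
    unfold Wk.nc
    classical
    apply Finset.card_le_card_of_injOn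
      (f := fun k => if k < i then k else if k = i then
        (if h : w'.Coll i then (hAi h).choose else 0) else k + D)
    · intro k hk
      simp only [Finset.mem_coe, Finset.mem_filter, Finset.mem_range] at hk ⊢
      obtain ⟨hkr, hkc⟩ := hk
      rcases Nat.lt_trichotomy k i with h | rfl | h
      · rw [if_pos h]
        exact ⟨by omega, (hcoll_lt k h).1 hkc⟩
      · rw [if_neg (lt_irrefl _), if_pos rfl, dif_pos hkc]
        obtain ⟨h1, h2, h3, _⟩ := (hAi hkc).choose_spec
        exact ⟨by omega, h3⟩
      · rw [if_neg (by omega), if_neg (by omega)]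
        have := (hcoll_gt k h).1 hkc
        exact ⟨by omega, this⟩
    · intro a ha b hb hab
      simp only [Finset.mem_coe, Finset.mem_filter, Finset.mem_range] at ha hb
      have hrange : ∀ c, c ∈ (Finset.range (w'.len + 1)).filter w'.Coll →
          (c < i → (if c < i then c else if c = i then
            (if h : w'.Coll i then (hAi h).choose else 0) else c + D) = c) := by
        intro c _ hc; rw [if_pos hc]
      -- case analysis
      have key : ∀ c, w'.Coll c →
          ((c < i ∧ (if c < i then c else if c = i then
            (if h : w'.Coll i then (hAi h).choose else 0) else c + D) = c) ∨
           (c = i ∧ ∃ k₀, i ≤ k₀ ∧ k₀ ≤ j ∧ (if c < i then c else if c = i then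
            (if h : w'.Coll i then (hAi h).choose else 0) else c + D) = k₀) ∨
           (i < c ∧ (if c < i then c else if c = i then
            (if h : w'.Coll i then (hAi h).choose else 0) else c + D) = c + D)) := by
        intro c hc
        rcases Nat.lt_trichotomy c i with h | rfl | h
        · exact Or.inl ⟨h, if_pos h⟩
        · refine Or.inr (Or.inl ⟨rfl, (hAi hc).choose, (hAi hc).choose_spec.1,
            (hAi hc).choose_spec.2.1, ?_⟩)
          rw [if_neg (lt_irrefl _), if_pos rfl, dif_pos hc]
        · exact Or.inr (Or.inr ⟨h, by rw [if_neg (by omega), if_neg (by omega)]⟩)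
      dsimp only at hab
      rcases key a ha.2 with ⟨h1, e1⟩ | ⟨ha1, k₀, hk1, hk2, e1⟩ | ⟨h1, e1⟩ <;>
        rcases key b hb.2 with ⟨h2, e2⟩ | ⟨hb1, k₀', hk1', hk2', e2⟩ | ⟨h2, e2⟩ <;>
        rw [e1, e2] at hab <;> omega

end Shortcut

section Surgery

variable {E : V → V → Prop} {X Y : V} {Z' Z : Set V}

/-- Surgery replacing the part of the walk after a bad collider by a directed chain to `Y`. -/
theorem surgBeta (hdag : Irreflexive (Relation.TransGen E))
    (w : Wk E X Y) (hw : w.Good Z' Z) {i : ℕ} (hi : w.Coll i)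
    (hbad : ∀ v, Relation.ReflTransGen E (w.vtx i) v → v ∉ Z')
    {m : ℕ} {u : ℕ → V} (hm : 0 < m) (hu0 : u 0 = w.vtx i) (hum : u m = Y)
    (hedge : ∀ k < m, E (u k) (u (k + 1)))
    (huX : ∀ t, t ≤ m → u t ≠ X) (huY : ∀ t, t < m → u t ≠ Y) :
    ∃ w' : Wk E X Y, w'.Good Z' Z ∧ w'.nc < w.nc := by
  obtain ⟨hb, hX, hY, hN, hC⟩ := hw
  obtain ⟨hi0, hilen, hiL, hiR⟩ := hi
  have antis : ∀ {a b : V}, E a b → E b a → False := fun h1 h2 =>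
    hdag _ ((Relation.TransGen.single h1).tail h2)
  set w' : Wk E X Y :=
    { len := i + m
      len_pos := by omega
      vtx := fun k => if k ≤ i then w.vtx k else u (k - i)
      first := by simp [w.first]
      last := by
        rw [if_neg (by omega), show i + m - i = m from by omega]; exact hum
      adj := by
        intro k hk
        by_cases h1 : k < i
        · rw [if_pos (by omega : k ≤ i), if_pos (by omega : k + 1 ≤ i)]
          exact w.adj k (by omega)
        · by_cases h2 : k = i
          · rw [if_pos (by omega : k ≤ i), if_neg (by omega : ¬ k + 1 ≤ i), h2,
              show i + 1 - i = 1 from by omega, ← hu0]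
            exact Or.inl (hedge 0 hm)
          · rw [if_neg (by omega), if_neg (by omega),
              show k + 1 - i = (k - i) + 1 from by omega]
            exact Or.inl (hedge (k - i) (by omega)) } with hw'
  have hvle : ∀ k, k ≤ i → w'.vtx k = w.vtx k := fun k hk => if_pos hk
  have hvge : ∀ k, i ≤ k → w'.vtx k = u (k - i) := by
    intro k hk
    rcases Nat.eq_or_lt_of_le hk with heq | h
    · have h1 : w'.vtx i = w.vtx i := if_pos (Nat.le_refl i)
      rw [← heq, h1, Nat.sub_self, hu0]
    · exact if_neg (by omega)
  have hlen' : w'.len = i + m := rfl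
  have hs1 : ∀ k, k < i → (w'.Coll k ↔ w.Coll k) := by
    intro k hk
    unfold Wk.Coll
    rw [hvle k hk.le, hvle (k - 1) (by omega), hvle (k + 1) (by omega), hlen']
    constructor
    · rintro ⟨h1, h2, h3, h4⟩; exact ⟨h1, by omega, h3, h4⟩
    · rintro ⟨h1, h2, h3, h4⟩; exact ⟨h1, by omega, h3, h4⟩
  have hs2 : ∀ k, i ≤ k → ¬ w'.Coll k := by
    rintro k hk ⟨h1, h2, h3, h4⟩
    rw [hvge k hk, hvge (k + 1) (by omega), show k + 1 - i = (k - i) + 1 from by omega]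
      at h4
    exact antis (hedge (k - i) (by rw [hlen'] at h2; omega)) h4
  have hanc_u : ∀ t, t ≤ m → Relation.ReflTransGen E (w.vtx i) (u t) := by
    intro t ht
    rw [← hu0]; exact chain_anc hedge 0 t (by omega) ht
  refine ⟨w', ⟨?_, ?_, ?_, ?_, ?_⟩, ?_⟩
  · rw [hvle 1 (by omega), hvle 0 (by omega)]; exact hb
  · intro k hk0 hkl
    by_cases hk : k ≤ i
    · rw [hvle k hk]; exact hX k hk0 (by omega)
    · rw [hvge k (by omega)]; exact huX (k - i) (by rw [hlen'] at hkl; omega)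
  · intro k hkl
    by_cases hk : k ≤ i
    · rw [hvle k hk]; exact hY k (by omega)
    · rw [hvge k (by omega)]; exact huY (k - i) (by rw [hlen'] at hkl; omega)
  · intro k hk0 hkl hnc
    by_cases hk : k < i
    · rw [hvle k hk.le]
      exact hN k hk0 (by omega) (fun hc => hnc ((hs1 k hk).2 hc))
    · rw [hvge k (by omega)]
      exact hbad _ (hanc_u (k - i) (by rw [hlen'] at hkl; omega))
  · intro k hc
    have hki : k < i := by
      by_contra h
      exact hs2 k (by omega) hc
    rw [hvle k hki.le]
    exact hC k ((hs1 k hki).1 hc)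
  · unfold Wk.nc
    have hsub : (Finset.range (w'.len + 1)).filter w'.Coll ⊆
        ((Finset.range (w.len + 1)).filter w.Coll).erase i := by
      intro k hk
      simp only [Finset.mem_filter, Finset.mem_range, Finset.mem_erase] at hk ⊢
      have hki : k < i := by
        by_contra h
        exact hs2 k (by omega) hk.2
      exact ⟨by omega, by omega, (hs1 k hki).1 hk.2⟩
    calc ((Finset.range (w'.len + 1)).filter w'.Coll).card
        ≤ (((Finset.range (w.len + 1)).filter w.Coll).erase i).card :=
          Finset.card_le_card hsub
      _ < ((Finset.range (w.len + 1)).filter w.Coll).card :=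
          Finset.card_erase_lt_of_mem (by
            simp only [Finset.mem_filter, Finset.mem_range]
            exact ⟨by omega, hi0, hilen, hiL, hiR⟩)

/-- Surgery replacing the part of the walk before a bad collider by a directed chain to `X`,
reversed. -/
theorem surgGamma (hdag : Irreflexive (Relation.TransGen E))
    (w : Wk E X Y) (hw : w.Good Z' Z) {i : ℕ} (hi : w.Coll i)
    (hbad : ∀ v, Relation.ReflTransGen E (w.vtx i) v → v ∉ Z')
    {m : ℕ} {u : ℕ → V} (hm : 0 < m) (hu0 : u 0 = w.vtx i) (hum : u m = X)
    (hedge : ∀ k < m, E (u k) (u (k + 1)))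
    (huX : ∀ t, t < m → u t ≠ X) (huY : ∀ t, t ≤ m → u t ≠ Y) :
    ∃ w' : Wk E X Y, w'.Good Z' Z ∧ w'.nc < w.nc := by
  obtain ⟨hb, hX, hY, hN, hC⟩ := hw
  obtain ⟨hi0, hilen, hiL, hiR⟩ := hi
  have antis : ∀ {a b : V}, E a b → E b a → False := fun h1 h2 =>
    hdag _ ((Relation.TransGen.single h1).tail h2)
  set w' : Wk E X Y :=
    { len := m + (w.len - i)
      len_pos := by omega
      vtx := fun k => if k ≤ m then u (m - k) else w.vtx (i + (k - m))
      first := by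
        rw [if_pos (by omega : (0:ℕ) ≤ m), Nat.sub_zero]; exact hum
      last := by
        rw [if_neg (by omega), show i + (m + (w.len - i) - m) = w.len from by omega]
        exact w.last
      adj := by
        intro k hk
        by_cases h1 : k + 1 ≤ m
        · rw [if_pos (by omega : k ≤ m), if_pos h1]
          refine Or.inr ?_
          rw [show m - (k + 1) = m - k - 1 from by omega]
          have := hedge (m - k - 1) (by omega)
          rwa [show m - k - 1 + 1 = m - k from by omega] at this
        · by_cases h2 : k = m
          · rw [if_pos (by omega : k ≤ m), if_neg (by omega), h2, Nat.sub_self, hu0,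
              show i + (m + 1 - m) = i + 1 from by omega]
            exact w.adj i (by omega)
          · rw [if_neg (by omega), if_neg (by omega),
              show i + (k + 1 - m) = (i + (k - m)) + 1 from by omega]
            exact w.adj (i + (k - m)) (by omega) } with hw'
  have hvle : ∀ k, k ≤ m → w'.vtx k = u (m - k) := fun k hk => if_pos hk
  have hvge : ∀ k, m ≤ k → w'.vtx k = w.vtx (i + (k - m)) := by
    intro k hk
    rcases Nat.eq_or_lt_of_le hk with heq | h
    · have h1 : w'.vtx m = u (m - m) := if_pos (Nat.le_refl m)
      rw [← heq, h1, Nat.sub_self, hu0, Nat.add_zero]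
    · exact if_neg (by omega)
  have hlen' : w'.len = m + (w.len - i) := rfl
  have ht1 : ∀ k, 0 < k → k ≤ m → ¬ w'.Coll k := by
    rintro k hk0 hkm ⟨h1, h2, h3, h4⟩
    rw [hvle k hkm, hvle (k - 1) (by omega),
      show m - (k - 1) = (m - k) + 1 from by omega] at h3
    exact antis (hedge (m - k) (by omega)) h3
  have ht2 : ∀ k, m < k → (w'.Coll k ↔ w.Coll (i + (k - m))) := by
    intro k hk
    unfold Wk.Coll
    have e1 : w'.vtx (k - 1) = w.vtx (i + (k - m) - 1) := by
      rw [hvge (k - 1) (by omega)]; congr 1; omega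
    have e2 : w'.vtx (k + 1) = w.vtx (i + (k - m) + 1) := by
      rw [hvge (k + 1) (by omega)]; congr 1; omega
    rw [hvge k hk.le, e1, e2, hlen']
    constructor
    · rintro ⟨h1, h2, h3, h4⟩; exact ⟨by omega, by omega, h3, h4⟩
    · rintro ⟨h1, h2, h3, h4⟩; exact ⟨by omega, by omega, h3, h4⟩
  have hanc_u : ∀ t, t ≤ m → Relation.ReflTransGen E (w.vtx i) (u t) := by
    intro t ht
    rw [← hu0]; exact chain_anc hedge 0 t (by omega) ht
  refine ⟨w', ⟨?_, ?_, ?_, ?_, ?_⟩, ?_⟩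
  · rw [hvle 1 (by omega), hvle 0 (by omega), Nat.sub_zero]
    have := hedge (m - 1) (by omega)
    rwa [show m - 1 + 1 = m from by omega] at this
  · intro k hk0 hkl
    by_cases hk : k ≤ m
    · rw [hvle k hk]; exact huX (m - k) (by omega)
    · rw [hvge k (by omega)]
      exact hX (i + (k - m)) (by omega) (by rw [hlen'] at hkl; omega)
  · intro k hkl
    by_cases hk : k ≤ m
    · rw [hvle k hk]; exact huY (m - k) (by omega)
    · rw [hvge k (by omega)]
      exact hY (i + (k - m)) (by rw [hlen'] at hkl; omega)
  · intro k hk0 hkl hnc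
    by_cases hk : k ≤ m
    · rw [hvle k hk]
      exact hbad _ (hanc_u (m - k) (by omega))
    · rw [hvge k (by omega)]
      exact hN (i + (k - m)) (by omega) (by rw [hlen'] at hkl; omega)
        (fun hc => hnc ((ht2 k (by omega)).2 hc))
  · intro k hc
    have hkm : m < k := by
      by_contra h
      exact ht1 k hc.1 (by omega) hc
    rw [hvge k hkm.le]
    exact hC (i + (k - m)) ((ht2 k hkm).1 hc)
  · unfold Wk.nc
    classical
    have hle : ((Finset.range (w'.len + 1)).filter w'.Coll).card ≤
        (((Finset.range (w.len + 1)).filter w.Coll).erase i).card := by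
      apply Finset.card_le_card_of_injOn (f := fun k => i + (k - m))
      · intro k hk
        simp only [Finset.mem_coe, Finset.mem_filter, Finset.mem_range, Finset.mem_erase] at hk ⊢
        have hkm : m < k := by
          by_contra h
          exact ht1 k hk.2.1 (by omega) hk.2
        refine ⟨by omega, ?_, (ht2 k hkm).1 hk.2⟩
        have := ((ht2 k hkm).1 hk.2).2.1
        omega
      · intro a ha b hb hab
        simp only [Finset.mem_coe, Finset.mem_filter, Finset.mem_range] at ha hb
        have hma : m < a := by
          by_contra h
          exact ht1 a ha.2.1 (by omega) ha.2
        have hmb : m < b := by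
          by_contra h
          exact ht1 b hb.2.1 (by omega) hb.2
        dsimp only at hab
        omega
    calc ((Finset.range (w'.len + 1)).filter w'.Coll).card
        ≤ (((Finset.range (w.len + 1)).filter w.Coll).erase i).card := hle
      _ < ((Finset.range (w.len + 1)).filter w.Coll).card :=
          Finset.card_erase_lt_of_mem (by
            simp only [Finset.mem_filter, Finset.mem_range]
            exact ⟨by omega, hi0, hilen, hiL, hiR⟩)

end Surgery

section MainArgument

variable {E : V → V → Prop} {X Y : V} {Z : Set V}

/-- Any path is automatically proper from a singleton source. -/
theorem proper_auto (p : GPath E X Y) : p.ProperFrom {X} := by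
  intro i hi hile hmem
  have : p.vtx i = p.vtx 0 := by
    rw [p.first]; exact hmem
  have := p.inj i 0 hile (by omega) this
  omega

/-- Under the ancestor condition, a non-causal open path must start with a backward edge. -/
theorem backdoor_of_open (hdag : Irreflexive (Relation.TransGen E))
    (hanc : ∀ z ∈ Z, ¬ Anc E X z) {S : Set V} (hS : S ⊆ Z)
    (p : GPath E X Y) (hncaus : ¬ p.Causal) (hopen : p.OpenGiven S) :
    E (p.vtx 1) (p.vtx 0) := by
  rcases p.adj 0 p.len_pos with h0 | h0
  · exfalso
    apply hncaus
    have key : ∀ i, i < p.len → E (p.vtx i) (p.vtx (i + 1)) ∧ Anc E X (p.vtx (i + 1)) := by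
      intro i
      induction i with
      | zero =>
          intro h
          refine ⟨h0, ?_⟩
          have h1 : Anc E (p.vtx 0) (p.vtx (0 + 1)) := Relation.ReflTransGen.single h0
          rwa [p.first] at h1
      | succ n ih =>
          intro h
          obtain ⟨he, hanc'⟩ := ih (by omega)
          rcases p.adj (n + 1) h with h1 | h1
          · exact ⟨h1, hanc'.tail h1⟩
          · exfalso
            have hcol : p.IsColliderAt (n + 1) := by
              refine ⟨by omega, h, ?_, h1⟩
              rwa [show n + 1 - 1 = n from by omega]
            obtain ⟨d, hd, hdesc⟩ := hopen.2 (n + 1) hcol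
            exact hanc d (hS hd) (hanc'.trans hdesc)
    exact fun i hi => (key i hi).1
  · exact h0

variable [Fintype V]

theorem main_contra (E : V → V → Prop)
    (hdag : Irreflexive (Relation.TransGen E))
    (X Y : V) (hXY : X ≠ Y)
    (Z : Set V) (hZsub : Z ⊆ ({X, Y} : Set V)ᶜ)
    (hadj : AdjustmentCriterion E {X} {Y} Z)
    (hanc : ∀ z ∈ Z, ¬ Anc E X z)
    (hmin : ∀ z ∈ Z, ¬ AdjustmentCriterion E {X} {Y} (Z \ {z}))
    (Z' : Set V) (hss : Z' ⊂ Z)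
    (hAC' : AdjustmentCriterion E {X} {Y} Z') : False := by
  have antis : ∀ {a b : V}, E a b → E b a → False := fun h1 h2 =>
    hdag _ ((Relation.TransGen.single h1).tail h2)
  -- extract a witness path for each z ∈ Z
  have pz : ∀ z ∈ Z, ∃ p : GPath E X Y, ¬ p.Causal ∧ p.OpenGiven (Z \ {z}) := by
    intro z hz
    have h := hmin z hz
    unfold AdjustmentCriterion at h
    rw [not_and_or] at h
    rcases h with h | h
    · exfalso
      exact h (fun w hw hex z' hz' => hadj.1 w hw hex z' hz'.1)
    · push_neg at h
      obtain ⟨x, hx, y, hy, p, hp, hncaus, hopen⟩ := h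
      rw [Set.mem_singleton_iff] at hx hy
      subst hx; subst hy
      exact ⟨p, hncaus, hopen⟩
  -- every element of Z is an ancestor of X or of Y
  have zAnc : ∀ z ∈ Z, Anc E z X ∨ Anc E z Y := by
    have wf : WellFounded (fun a b : V => Relation.TransGen E b a) := by
      haveI : IsTrans V (fun a b : V => Relation.TransGen E b a) :=
        ⟨fun a b c h1 h2 => h2.trans h1⟩
      haveI : IsIrrefl V (fun a b : V => Relation.TransGen E b a) :=
        ⟨fun a h => hdag a h⟩
      exact @Finite.wellFounded_of_trans_of_irrefl V _ _ _ _
    have H : ∀ z, (∀ y, Relation.TransGen E z y → (y ∈ Z → Anc E y X ∨ Anc E y Y)) →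
        z ∈ Z → Anc E z X ∨ Anc E z Y := by
      intro z ih hz
      obtain ⟨p, hncaus, hopen⟩ := pz z hz
      have hblock : ¬ p.OpenGiven Z :=
        hadj.2 X rfl Y rfl p (proper_auto p) hncaus
      have hB : ∀ i, p.IsColliderAt i → ∃ d ∈ Z, Anc E (p.vtx i) d := fun i hc =>
        let ⟨d, hd, h⟩ := hopen.2 i hc; ⟨d, hd.1, h⟩
      have hnA : ¬ (∀ i, 0 < i → i < p.len → ¬ p.IsColliderAt i → p.vtx i ∉ Z) :=
        fun hA => hblock ⟨hA, hB⟩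
      push_neg at hnA
      obtain ⟨i, hi0, hilen, hncol, hmem⟩ := hnA
      have hvz : p.vtx i = z := by
        by_contra hne
        exact hopen.1 i hi0 hilen hncol ⟨hmem, by simpa using hne⟩
      -- view p as a walk
      set wp : Wk E X Y := ⟨p.len, p.len_pos, p.vtx, p.first, p.last, p.adj⟩ with hwp
      have hwplen : wp.len = p.len := rfl
      have hcolleq : ∀ j, wp.Coll j ↔ p.IsColliderAt j := fun j => Iff.rfl
      rcases p.adj i hilen with hf | hf
      · -- forward ray
        obtain ⟨l, hl1, hl2, hanc', hend, -⟩ := wkFwd wp (wp.len - i) i rfl hilen hf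
        have hancz : Relation.TransGen E z (p.vtx l) := by
          rw [← hvz]
          exact Relation.TransGen.head' hf hanc'
        rcases hend with heq | hcl
        · right
          have : p.vtx l = Y := by rw [heq]; exact p.last
          rw [← this]
          exact hancz.to_reflTransGen
        · obtain ⟨d, hd, hdz⟩ := hopen.2 l ((hcolleq l).1 hcl)
          have htd : Relation.TransGen E z d := hancz.trans_left hdz
          rcases ih d htd hd.1 with h | h
          · exact Or.inl (htd.to_reflTransGen.trans h)
          · exact Or.inr (htd.to_reflTransGen.trans h)
      · -- backward ray
        have hfi : E (p.vtx i) (p.vtx (i - 1)) := by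
          have hadj' := p.adj (i - 1) (by omega)
          rw [show i - 1 + 1 = i from by omega] at hadj'
          rcases hadj' with h | h
          · exact absurd (⟨hi0, hilen, h, hf⟩ : p.IsColliderAt i) hncol
          · exact h
        obtain ⟨l, hl1, hanc', hend⟩ := wkBwd wp (i - 1) (by omega)
          (by rwa [show i - 1 + 1 = i from by omega])
        have hancz : Relation.TransGen E z (p.vtx l) := by
          rw [← hvz]
          exact Relation.TransGen.head' hfi hanc'
        rcases hend with heq | hcl
        · left
          have : p.vtx l = X := by rw [heq]; exact p.first
          rw [← this]
          exact hancz.to_reflTransGen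
        · obtain ⟨d, hd, hdz⟩ := hopen.2 l ((hcolleq l).1 hcl)
          have htd : Relation.TransGen E z d := hancz.trans_left hdz
          rcases ih d htd hd.1 with h | h
          · exact Or.inl (htd.to_reflTransGen.trans h)
          · exact Or.inr (htd.to_reflTransGen.trans h)
    intro z hz
    exact wf.induction (C := fun v => v ∈ Z → Anc E v X ∨ Anc E v Y) z
      (fun x ih => H x (fun y ht hy => ih y ht hy)) hz
  -- no good walk exists
  have noGood : ∀ w : Wk E X Y, ¬ w.Good Z' Z := by
    have key : ∀ n (w : Wk E X Y), w.Good Z' Z → w.nc = n → False := by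
      intro n
      induction n using Nat.strong_induction_on with
      | _ n ihn =>
        have key2 : ∀ l (w : Wk E X Y), w.Good Z' Z → w.nc = n → w.len = l → False := by
          intro l
          induction l using Nat.strong_induction_on with
          | _ l ihl =>
            intro w hw hn hl
            by_cases hbad : ∃ i, w.Coll i ∧ ∀ d ∈ Z', ¬ Anc E (w.vtx i) d
            · -- a bad collider: do surgery
              obtain ⟨i, hi, hbd⟩ := hbad
              have hbad' : ∀ v, Anc E (w.vtx i) v → v ∉ Z' := fun v hv hvZ => hbd v hvZ hv
              obtain ⟨d, hdZ, hdanc⟩ := hw.2.2.2.2 i hi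
              have hciX : w.vtx i ≠ X := hw.2.1 i hi.1 (le_of_lt hi.2.1)
              have hciY : w.vtx i ≠ Y := hw.2.2.1 i hi.2.1
              have hsurg : ∃ w' : Wk E X Y, w'.Good Z' Z ∧ w'.nc < w.nc := by
                by_cases hcX : Anc E (w.vtx i) X
                · obtain ⟨m, u, hu0, hum, hedge⟩ := chain_of_anc hcX
                  have hm : 0 < m := by
                    rcases Nat.eq_zero_or_pos m with rfl | h
                    · exact absurd (hu0.symm.trans hum) hciX
                    · exact h
                  by_cases hYin : ∃ t, t < m ∧ u t = Y
                  · -- truncate the chain at the first occurrence of Y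
                    have ht := Nat.find_spec hYin
                    set t := Nat.find hYin with htdef
                    have ht0 : 0 < t := by
                      rcases Nat.eq_zero_or_pos t with h0 | h
                      · exfalso
                        apply hciY
                        rw [← hu0, ← ht.2, h0]
                      · exact h
                    refine surgBeta hdag w hw hi hbad' ht0 hu0 ht.2
                      (fun k hk => hedge k (by omega)) ?_ ?_
                    · intro s hs hsX
                      have h := chain_transGen hedge s m (by omega) (le_refl m)
                      rw [hsX, hum] at h
                      exact hdag X h
                    · intro s hs hsY
                      exact Nat.find_min hYin (show s < t from hs) ⟨by omega, hsY⟩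
                  · push_neg at hYin
                    refine surgGamma hdag w hw hi hbad' hm hu0 hum hedge ?_ ?_
                    · intro s hs hsX
                      have h := chain_transGen hedge s m hs (le_refl m)
                      rw [hsX, hum] at h
                      exact hdag X h
                    · intro s hs
                      rcases Nat.eq_or_lt_of_le hs with rfl | h
                      · rw [hum]; exact hXY
                      · exact hYin s h
                · have hcY : Anc E (w.vtx i) Y := by
                    rcases zAnc d hdZ with h | h
                    · exact absurd (hdanc.trans h) hcX
                    · exact hdanc.trans h
                  obtain ⟨m, u, hu0, hum, hedge⟩ := chain_of_anc hcY
                  have hm : 0 < m := by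
                    rcases Nat.eq_zero_or_pos m with rfl | h
                    · exact absurd (hu0.symm.trans hum) hciY
                    · exact h
                  refine surgBeta hdag w hw hi hbad' hm hu0 hum hedge ?_ ?_
                  · intro s hs hsX
                    apply hcX
                    rw [← hu0, ← hsX]
                    exact chain_anc hedge 0 s (by omega) hs
                  · intro s hs hsY
                    have h := chain_transGen hedge s m hs (le_refl m)
                    rw [hsY, hum] at h
                    exact hdag Y h
              obtain ⟨w', hw', hlt⟩ := hsurg
              exact ihn w'.nc (by omega) w' hw' rfl
            · -- no bad collider
              push_neg at hbad
              by_cases hrep : ∃ i j, i < j ∧ j ≤ w.len ∧ w.vtx i = w.vtx j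
              · obtain ⟨i, j, hij, hjl, heq⟩ := hrep
                obtain ⟨w', hw', hnc, hlen⟩ := shortcut hdag hXY w hw hij hjl heq
                rcases Nat.lt_or_ge w'.nc n with h | h
                · exact ihn w'.nc h w' hw' rfl
                · exact ihl w'.len (by omega) w' hw' (by omega) rfl
              · push_neg at hrep
                have hinj : ∀ a b, a ≤ w.len → b ≤ w.len → w.vtx a = w.vtx b → a = b := by
                  intro a b ha hb he
                  by_contra hne
                  rcases Nat.lt_or_ge a b with h | h
                  · exact hrep a b h hb he
                  · exact hrep b a (by omega) ha he.symm
                set q : GPath E X Y :=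
                  ⟨w.len, w.len_pos, w.vtx, w.first, w.last, hinj, w.adj⟩ with hq
                have hncaus : ¬ q.Causal := fun hc => antis (hc 0 w.len_pos) hw.1
                have hopen : q.OpenGiven Z' :=
                  ⟨fun i h1 h2 hnc => hw.2.2.2.1 i h1 h2 hnc,
                   fun i hc => hbad i hc⟩
                exact hAC'.2 X rfl Y rfl q (proper_auto q) hncaus hopen
        exact fun w hw hn => key2 w.len w hw hn rfl
    exact fun w hw => key w.nc w hw rfl
  -- initial walk
  obtain ⟨z₀, hz₀Z, hz₀⟩ := Set.exists_of_ssubset hss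
  obtain ⟨p, hncaus, hopen⟩ := pz z₀ hz₀Z
  have hbd := backdoor_of_open hdag hanc Set.diff_subset p hncaus hopen
  set w : Wk E X Y := ⟨p.len, p.len_pos, p.vtx, p.first, p.last, p.adj⟩ with hwdef
  have hwlen : w.len = p.len := rfl
  apply noGood w
  refine ⟨hbd, ?_, ?_, ?_, ?_⟩
  · intro i hi0 hile hiX
    have : p.vtx i = p.vtx 0 := by rw [p.first]; exact hiX
    have := p.inj i 0 hile (by omega) this
    omega
  · intro i hil hiY
    have : p.vtx i = p.vtx p.len := by rw [p.last]; exact hiY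
    have := p.inj i p.len (by omega) (le_refl _) this
    omega
  · intro i hi0 hil hnc hiZ'
    have hiZ : p.vtx i ∈ Z \ {z₀} := by
      refine ⟨hss.1 hiZ', ?_⟩
      simp only [Set.mem_singleton_iff]
      intro h
      exact hz₀ (h ▸ hiZ')
    exact hopen.1 i hi0 hil hnc hiZ
  · intro i hc
    obtain ⟨d, hd, hdesc⟩ := hopen.2 i hc
    exact ⟨d, hd.1, hdesc⟩

end MainArgument

/-- **Equivalence of elementwise minimality and minimality.** If `Z` satisfies the
adjustment criterion relative to `({X}, {Y})` and `X` is not an ancestor of any vertex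
of `Z`, then `Z` is elementwise minimal iff no proper subset of `Z` satisfies the
adjustment criterion relative to `({X}, {Y})`. -/
theorem stmt_13 [Fintype V] (E : V → V → Prop)
    (hdag : Irreflexive (Relation.TransGen E))
    (X Y : V) (hXY : X ≠ Y)
    (Z : Set V) (hZsub : Z ⊆ ({X, Y} : Set V)ᶜ)
    (hadj : AdjustmentCriterion E {X} {Y} Z)
    (hanc : ∀ z ∈ Z, ¬ Anc E X z) :
    (∀ z ∈ Z, ¬ AdjustmentCriterion E {X} {Y} (Z \ {z})) ↔
      (∀ Z', Z' ⊂ Z → ¬ AdjustmentCriterion E {X} {Y} Z') := by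
  constructor
  · intro hmin Z' hss hAC'
    exact main_contra E hdag X Y hXY Z hZsub hadj hanc hmin Z' hss hAC'
  · intro h z hz
    exact h (Z \ {z}) (Set.sdiff_singleton_ssubset.2 hz)
end

section
/- Let V be a finite type and E a DAG on V. Let X, Y be distinct vertices and Z ⊆ V \ {X, Y} a set such that Z satisfies the adjustment criterion relative to ({X}, {Y}) and X is not an ancestor of any vertex of Z. Let Z ∈ Z, and let q be a path from Z to Y that is open given (Z \ {Z}) ∪ {X} and has the fewest colliders among all paths from Z to Y that are open given (Z \ {Z}) ∪ {X}. Then q is open given Z \ {Z}. -/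
open scoped Classical

variable {V : Type*}

section Helpers

variable {E : V → V → Prop}

private lemma walk_transGen {f : ℕ → V} {m : ℕ} (hadj : ∀ t < m, E (f t) (f (t+1))) :
    ∀ s t, s < t → t ≤ m → Relation.TransGen E (f s) (f t) := by
  intro s t hst htm
  induction t with
  | zero => omega
  | succ t ih =>
    rcases Nat.lt_succ_iff_lt_or_eq.mp hst with h | h
    · exact (ih h (by omega)).tail (hadj t (by omega))
    · subst h; exact Relation.TransGen.single (hadj s (by omega))

private lemma walk_anc {f : ℕ → V} {m : ℕ} (hadj : ∀ t < m, E (f t) (f (t+1))) :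
    ∀ s t, s ≤ t → t ≤ m → Anc E (f s) (f t) := by
  intro s t hst htm
  rcases Nat.lt_or_ge s t with h | h
  · exact (walk_transGen hadj s t h htm).to_reflTransGen
  · have : s = t := by omega
    subst this; exact Relation.ReflTransGen.refl

private lemma dag_asymm (hdag : Irreflexive (Relation.TransGen E)) {u v : V}
    (h1 : E u v) (h2 : E v u) : False :=
  hdag u ((Relation.TransGen.single h1).tail h2)

private lemma dag_no_cycle (hdag : Irreflexive (Relation.TransGen E)) {u v : V}
    (h1 : Relation.TransGen E u v) (h2 : Relation.TransGen E v u) : False :=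
  hdag u (h1.trans h2)

private lemma exists_inj_walk {c x : V} (h : Anc E c x) :
    ∃ m, ∃ f : ℕ → V, f 0 = c ∧ f m = x ∧ (∀ t < m, E (f t) (f (t+1))) ∧
      (∀ s t, s ≤ m → t ≤ m → f s = f t → s = t) := by
  have hex : ∃ m, ∃ f : ℕ → V, f 0 = c ∧ f m = x ∧ (∀ t < m, E (f t) (f (t+1))) := by
    induction h with
    | refl => exact ⟨0, fun _ => c, rfl, rfl, by omega⟩
    | @tail b x hcb hbx ih =>
      obtain ⟨m, f, h0, hm, hadj⟩ := ih
      refine ⟨m + 1, fun t => if t ≤ m then f t else x, by simp [h0], by simp, ?_⟩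
      intro t ht
      rcases Nat.lt_or_ge t m with h | h
      · simpa [Nat.le_of_lt h, Nat.succ_le_of_lt h] using hadj t h
      · have : t = m := by omega
        subst this
        simpa [hm] using hbx
  classical
  set M := Nat.find hex with hM
  obtain ⟨f, h0, hm, hadj⟩ := Nat.find_spec hex
  refine ⟨M, f, h0, hm, hadj, ?_⟩
  by_contra hni
  push_neg at hni
  obtain ⟨s, t, hs, ht, heq, hne⟩ := hni
  -- wlog s < t
  have key : ∀ s t, s ≤ M → t ≤ M → f s = f t → s < t → False := by
    intro s t hs ht heq hst
    set d := t - s with hd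
    have hd1 : 1 ≤ d := by omega
    have : ∃ g : ℕ → V, g 0 = c ∧ g (M - d) = x ∧ (∀ u < M - d, E (g u) (g (u+1))) := by
      refine ⟨fun u => if u < s then f u else f (u + d), ?_, ?_, ?_⟩
      · rcases Nat.eq_zero_or_pos s with h | h
        · subst h
          simp only [Nat.lt_irrefl, if_false]
          rw [show (0:ℕ) + d = t by omega, ← heq]
          exact h0
        · simpa [h] using h0
      · have h1 : ¬ (M - d < s) := by omega
        simp only [h1, if_false]
        rw [show M - d + d = M by omega]; exact hm
      · intro u hu
        rcases Nat.lt_or_ge (u+1) s with h | h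
        · have : u < s := by omega
          simp only [h, this, if_true]
          exact hadj u (by omega)
        · rcases Nat.lt_or_ge u s with h2 | h2
          · have : u + 1 = s := by omega
            simp only [h2, if_true, show ¬ (u+1 < s) by omega, if_false]
            rw [show u + 1 + d = t by omega]
            rw [← heq, ← this]
            exact hadj u (by omega)
          · simp only [show ¬ (u < s) by omega, show ¬ (u+1 < s) by omega, if_false]
            rw [show u + 1 + d = u + d + 1 by omega]
            exact hadj (u + d) (by omega)
    obtain ⟨g, hg⟩ := this
    have := Nat.find_min hex (m := M - d) (by omega)
    exact this ⟨g, hg⟩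
  rcases Nat.lt_or_ge s t with h | h
  · exact key s t hs ht heq h
  · exact key t s ht hs heq.symm (by omega)

end Helpers

namespace GPath

variable {E : V → V → Prop} {a b : V}

/-- Reversal of a path. -/
def rev (p : GPath E a b) : GPath E b a where
  len := p.len
  len_pos := p.len_pos
  vtx := fun j => p.vtx (p.len - j)
  first := by simpa using p.last
  last := by simpa using p.first
  inj := by
    intro i j hi hj h
    have := p.inj _ _ (Nat.sub_le _ _) (Nat.sub_le _ _) h
    omega
  adj := by
    intro i hi
    have h1 : p.len - (i+1) + 1 = p.len - i := by omega
    rcases p.adj (p.len - (i+1)) (by omega) with h | h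
    · right; rwa [h1] at h
    · left; rwa [h1] at h

lemma rev_len (p : GPath E a b) : p.rev.len = p.len := rfl

lemma rev_vtx (p : GPath E a b) (i : ℕ) : p.rev.vtx i = p.vtx (p.len - i) := rfl

lemma rev_collider_iff (p : GPath E a b) (i : ℕ) :
    p.rev.IsColliderAt i ↔ p.IsColliderAt (p.len - i) := by
  unfold IsColliderAt
  constructor
  · rintro ⟨h1, h2, h3, h4⟩
    rw [rev_len] at h2
    refine ⟨by omega, by omega, ?_, ?_⟩
    · rw [rev_vtx, rev_vtx, show p.len - (i+1) = p.len - i - 1 by omega] at h4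
      exact h4
    · rw [rev_vtx, rev_vtx, show p.len - (i-1) = p.len - i + 1 by omega] at h3
      exact h3
  · rintro ⟨h1, h2, h3, h4⟩
    have hi1 : 0 < i := by omega
    have hi2 : i < p.len := by omega
    refine ⟨hi1, by rw [rev_len]; exact hi2, ?_, ?_⟩
    · rw [rev_vtx, rev_vtx, show p.len - (i-1) = p.len - i + 1 by omega]
      exact h4
    · rw [rev_vtx, rev_vtx, show p.len - (i+1) = p.len - i - 1 by omega]
      exact h3

lemma rev_numColliders (p : GPath E a b) : p.rev.numColliders = p.numColliders := by
  unfold numColliders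
  have himg : (fun i => p.len - i) '' {i | p.rev.IsColliderAt i} = {i | p.IsColliderAt i} := by
    ext j
    constructor
    · rintro ⟨i, hi, rfl⟩
      exact (rev_collider_iff p i).mp hi
    · intro hj
      have hjlt : j < p.len := hj.2.1
      exact ⟨p.len - j, (rev_collider_iff p (p.len - j)).mpr
        (by rwa [show p.len - (p.len - j) = j by omega]), by show p.len - (p.len - j) = j; omega⟩
  rw [← himg, Set.ncard_image_of_injOn]
  intro i hi j hj h
  have h1 : i < p.len := by have := hi.2.1; rwa [rev_len] at this
  have h2 : j < p.len := by have := hj.2.1; rwa [rev_len] at this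
  simp only at h
  omega

lemma rev_openGiven (p : GPath E a b) (S : Set V) (h : p.OpenGiven S) :
    p.rev.OpenGiven S := by
  constructor
  · intro i h0 hl hnc
    rw [rev_len] at hl
    have hnc' : ¬ p.IsColliderAt (p.len - i) := by
      intro hc
      exact hnc ((rev_collider_iff p i).mpr hc)
    rw [rev_vtx]
    exact h.1 _ (by omega) (by omega) hnc'
  · intro i hc
    rw [rev_vtx]
    exact h.2 _ ((rev_collider_iff p i).mp hc)

end GPath


section Splice

variable {E : V → V → Prop} {a b : V}

private lemma chain_back (B : GPath E a b) {i0 k : ℕ} (h1 : i0 < k) (h2 : k ≤ B.len)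
    (hnc : ∀ j, i0 < j → j < k → ¬ B.IsColliderAt j)
    (hlast : E (B.vtx k) (B.vtx (k-1))) :
    Relation.TransGen E (B.vtx k) (B.vtx i0) := by
  have hstep : ∀ j, i0 ≤ j → j < k → E (B.vtx (j+1)) (B.vtx j) := by
    have key : ∀ d j, i0 ≤ j → j + d + 1 = k → E (B.vtx (j+1)) (B.vtx j) := by
      intro d
      induction d with
      | zero =>
        intro j h1' h2'
        have hj : j + 1 = k := by omega
        rw [hj, show j = k - 1 by omega]
        exact hlast
      | succ d ih =>
        intro j hj1 hj2
        have h3 : E (B.vtx (j+1+1)) (B.vtx (j+1)) := ih (j+1) (by omega) (by omega)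
        have hnc' := hnc (j+1) (by omega) (by omega)
        rcases B.adj j (by omega) with h | h
        · exfalso
          exact hnc' ⟨by omega, by omega, by simpa using h, h3⟩
        · exact h
    intro j hj1 hj2
    exact key (k - j - 1) j hj1 (by omega)
  have hchain : ∀ d, 1 ≤ d → d ≤ k - i0 → Relation.TransGen E (B.vtx k) (B.vtx (k - d)) := by
    intro d
    induction d with
    | zero => omega
    | succ d ih =>
      intro _ hle
      rcases Nat.eq_zero_or_pos d with h | h
      · subst h
        have := hstep (k-1) (by omega) (by omega)
        rw [show k - 1 + 1 = k by omega] at this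
        exact Relation.TransGen.single this
      · have h4 := hstep (k - (d+1)) (by omega) (by omega)
        rw [show k - (d+1) + 1 = k - d by omega] at h4
        exact (ih h (by omega)).tail h4
  have := hchain (k - i0) (by omega) le_rfl
  rwa [show k - (k - i0) = i0 by omega] at this

private lemma splice_lemma (hdag : Irreflexive (Relation.TransGen E))
    (B : GPath E a b) {S : Set V} {X : V}
    (hB : B.OpenGiven (S ∪ {X}))
    {i0 : ℕ} (hi0 : B.IsColliderAt i0)
    {m : ℕ} {f : ℕ → V} (hm : 1 ≤ m)
    (hf0 : f 0 = B.vtx i0) (hfm : f m = X)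
    (hfadj : ∀ t < m, E (f t) (f (t+1)))
    (hfinj : ∀ s t, s ≤ m → t ≤ m → f s = f t → s = t)
    {t' k : ℕ} (ht'1 : 1 ≤ t') (ht'm : t' ≤ m)
    (hk1 : i0 < k) (hk2 : k ≤ B.len)
    (hfk : f t' = B.vtx k)
    (hdisj : ∀ j, 0 < j → j < t' → ∀ i ≤ B.len, f j ≠ B.vtx i)
    (hS : ∀ t ≤ m, f t ∉ S) :
    ∃ B' : GPath E a b, B'.OpenGiven (S ∪ {X}) ∧ B'.numColliders < B.numColliders := by
  classical
  have hi0pos : 0 < i0 := hi0.1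
  have hi0lt : i0 < B.len := hi0.2.1
  set J := i0 + t' with hJ
  set L := J + (B.len - k) with hL
  set D : ℕ → V := fun j => if j ≤ i0 then B.vtx j else
    if j ≤ J then f (j - i0) else B.vtx (k + (j - J)) with hD
  have hDq : ∀ j, j ≤ i0 → D j = B.vtx j := fun j hj => by simp [hD, hj]
  have hDf : ∀ j, i0 ≤ j → j ≤ J → D j = f (j - i0) := by
    intro j hj1 hj2
    rcases Nat.eq_or_lt_of_le hj1 with h | h
    · rw [← h]; simp [hD, hf0]
    · simp [hD, show ¬ j ≤ i0 by omega, hj2]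
  have hDs : ∀ j, J ≤ j → D j = B.vtx (k + (j - J)) := by
    intro j hj
    rcases Nat.eq_or_lt_of_le hj with h | h
    · rw [← h, hDf J (by omega) le_rfl, show J - i0 = t' by omega, hfk,
        show k + (J - J) = k by omega]
    · simp [hD, show ¬ j ≤ i0 by omega, show ¬ j ≤ J by omega]
  have hLpos : 0 < L := by omega
  have hfirst : D 0 = a := by rw [hDq 0 (by omega), B.first]
  have hlastD : D L = b := by
    rw [hDs L (by omega), show k + (L - J) = B.len by omega, B.last]
  have hinjD : ∀ i j, i ≤ L → j ≤ L → D i = D j → i = j := by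
    have hcase : ∀ u, u ≤ i0 ∨ (i0 < u ∧ u < J) ∨ J ≤ u := by omega
    intro i j hi hj hij
    rcases hcase i with h1 | h1 | h1 <;> rcases hcase j with h2 | h2 | h2
    · rw [hDq i h1, hDq j h2] at hij
      exact B.inj _ _ (by omega) (by omega) hij
    · rw [hDq i h1, hDf j (by omega) (by omega)] at hij
      exact absurd hij.symm (hdisj (j - i0) (by omega) (by omega) i (by omega))
    · rw [hDq i h1, hDs j h2] at hij
      have := B.inj _ _ (by omega) (by omega) hij
      omega
    · rw [hDf i (by omega) (by omega), hDq j h2] at hij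
      exact absurd hij (hdisj (i - i0) (by omega) (by omega) j (by omega))
    · rw [hDf i (by omega) (by omega), hDf j (by omega) (by omega)] at hij
      have := hfinj (i - i0) (j - i0) (by omega) (by omega) hij
      omega
    · rw [hDf i (by omega) (by omega), hDs j h2] at hij
      exact absurd hij (hdisj (i - i0) (by omega) (by omega) (k + (j - J)) (by omega))
    · rw [hDs i h1, hDq j h2] at hij
      have := B.inj _ _ (by omega) (by omega) hij
      omega
    · rw [hDs i h1, hDf j (by omega) (by omega)] at hij
      exact absurd hij.symm (hdisj (j - i0) (by omega) (by omega) (k + (i - J)) (by omega))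
    · rw [hDs i h1, hDs j h2] at hij
      have := B.inj _ _ (by omega) (by omega) hij
      omega
  have hadjD : ∀ j, j < L → E (D j) (D (j+1)) ∨ E (D (j+1)) (D j) := by
    intro j hjL
    rcases (by omega : j + 1 ≤ i0 ∨ (i0 ≤ j ∧ j + 1 ≤ J) ∨ J ≤ j) with h | h | h
    · rw [hDq j (by omega), hDq (j+1) h]
      exact B.adj j (by omega)
    · rw [hDf j h.1 (by omega), hDf (j+1) (by omega) h.2]
      left
      have := hfadj (j - i0) (by omega)
      rwa [show j - i0 + 1 = j + 1 - i0 by omega] at this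
    · rw [hDs j h, hDs (j+1) (by omega),
        show k + (j + 1 - J) = k + (j - J) + 1 by omega]
      exact B.adj _ (by omega)
  set B' : GPath E a b := ⟨L, hLpos, D, hfirst, hlastD, hinjD, hadjD⟩ with hB'
  have hB'len : B'.len = L := rfl
  have hB'vtx : ∀ j, B'.vtx j = D j := fun _ => rfl
  have hcolE : ∀ j, B'.IsColliderAt j ↔
      (0 < j ∧ j < L ∧ E (D (j-1)) (D j) ∧ E (D (j+1)) (D j)) := fun j => Iff.rfl
  have hcX : B.vtx i0 ≠ X := by
    intro h
    have := hfinj 0 m (by omega) le_rfl (by rw [hf0, hfm, h])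
    omega
  have hXanc : Anc E (B.vtx k) X := by
    rw [← hfk, ← hfm]
    exact walk_anc hfadj t' m ht'm le_rfl
  have hlow : ∀ j, j < i0 → (B'.IsColliderAt j ↔ B.IsColliderAt j) := by
    intro j hj
    rw [hcolE]
    unfold GPath.IsColliderAt
    rw [hDq (j-1) (by omega), hDq j (by omega), hDq (j+1) (by omega)]
    constructor
    · rintro ⟨a1,a2,a3,a4⟩; exact ⟨a1, by omega, a3, a4⟩
    · rintro ⟨a1,a2,a3,a4⟩; exact ⟨a1, by omega, a3, a4⟩
  have hati0 : ¬ B'.IsColliderAt i0 := by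
    intro hc
    rw [hcolE] at hc
    have h4 := hc.2.2.2
    rw [hDf (i0+1) (by omega) (by omega), hDf i0 le_rfl (by omega),
      show i0+1-i0 = 1 by omega, show i0-i0 = 0 by omega] at h4
    exact dag_asymm hdag (hfadj 0 (by omega)) h4
  have hfpart : ∀ j, i0 < j → j < J → ¬ B'.IsColliderAt j := by
    intro j h1 h2 hc
    rw [hcolE] at hc
    have h4 := hc.2.2.2
    rw [hDf (j+1) (by omega) (by omega), hDf j (by omega) (by omega)] at h4
    have h5 := hfadj (j - i0) (by omega)
    rw [show j - i0 + 1 = j + 1 - i0 by omega] at h5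
    exact dag_asymm hdag h5 h4
  have hatJE : J < L → (B'.IsColliderAt J ↔ E (B.vtx (k+1)) (B.vtx k)) := by
    intro hJL
    rw [hcolE]
    have e1 : D (J+1) = B.vtx (k+1) := by
      rw [hDs (J+1) (by omega), show k + (J+1-J) = k+1 by omega]
    have e2 : D J = B.vtx k := by
      rw [hDs J le_rfl, show k + (J-J) = k by omega]
    have e3 : D (J-1) = f (t'-1) := by
      rw [hDf (J-1) (by omega) (by omega), show J-1-i0 = t'-1 by omega]
    rw [e1, e2, e3]
    constructor
    · rintro ⟨_,_,_,h4⟩; exact h4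
    · intro h4
      refine ⟨by omega, hJL, ?_, h4⟩
      have := hfadj (t'-1) (by omega)
      rwa [show t'-1+1 = t' by omega, hfk] at this
  have hhigh : ∀ j, J < j → (B'.IsColliderAt j ↔ B.IsColliderAt (k + (j - J))) := by
    intro j hj
    rw [hcolE]
    unfold GPath.IsColliderAt
    rw [hDs (j-1) (by omega), hDs j (by omega), hDs (j+1) (by omega),
        show k + (j-1-J) = k + (j - J) - 1 by omega,
        show k + (j+1-J) = k + (j-J)+1 by omega]
    constructor
    · rintro ⟨a1,a2,a3,a4⟩; exact ⟨by omega, by omega, a3, a4⟩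
    · rintro ⟨a1,a2,a3,a4⟩; exact ⟨by omega, by omega, a3, a4⟩
  have hopen : B'.OpenGiven (S ∪ {X}) := by
    constructor
    · intro j hj0 hjL hnc
      rw [hB'len] at hjL
      rcases (by omega : j < i0 ∨ j = i0 ∨ (i0 < j ∧ j < J) ∨ (j = J ∧ J < L) ∨ J < j)
        with h | h | h | h | h
      · rw [hB'vtx, hDq j (by omega)]
        exact hB.1 j hj0 (by omega) (fun hc => hnc ((hlow j h).mpr hc))
      · subst h
        rw [hB'vtx, hDq j le_rfl]
        rintro (hm1 | hm1)
        · rw [← hf0] at hm1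
          exact hS 0 (by omega) hm1
        · exact hcX hm1
      · rw [hB'vtx, hDf j (by omega) (by omega)]
        rintro (hm1 | hm1)
        · exact hS (j - i0) (by omega) hm1
        · have hx : f (j - i0) = X := hm1
          have := hfinj (j - i0) m (by omega) le_rfl (by rw [hx, hfm])
          omega
      · obtain ⟨hjJ, hJL⟩ := h
        subst hjJ
        have hkn : k < B.len := by omega
        have hnotE : ¬ E (B.vtx (k+1)) (B.vtx k) := fun hE => hnc ((hatJE hJL).mpr hE)
        rw [hB'vtx, hDs J le_rfl, show k + (J - J) = k by omega]
        rintro (hm1 | hm1)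
        · rw [← hfk] at hm1
          exact hS t' ht'm hm1
        · have hXk : B.vtx k = X := hm1
          by_cases hck : B.IsColliderAt k
          · exact hnotE hck.2.2.2
          · have := hB.1 k (by omega) hkn hck
            rw [hXk] at this
            exact this (Or.inr rfl)
      · rw [hB'vtx, hDs j (by omega)]
        exact hB.1 (k + (j - J)) (by omega) (by omega)
          (fun hc => hnc ((hhigh j h).mpr hc))
    · intro j hc
      have hjL : j < L := by
        have := hc.2.1; rwa [hB'len] at this
      have hj0 : 0 < j := hc.1
      rcases (by omega : j < i0 ∨ j = i0 ∨ (i0 < j ∧ j < J) ∨ (j = J ∧ J < L) ∨ J < j)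
        with h | h | h | h | h
      · obtain ⟨d, hd, hanc⟩ := hB.2 j ((hlow j h).mp hc)
        exact ⟨d, hd, by rw [hB'vtx, hDq j (by omega)]; exact hanc⟩
      · rw [h] at hc
        exact absurd hc hati0
      · exact absurd hc (hfpart j h.1 h.2)
      · refine ⟨X, Or.inr rfl, ?_⟩
        rw [hB'vtx, h.1, hDs J le_rfl, show k + (J - J) = k by omega]
        exact hXanc
      · obtain ⟨d, hd, hanc⟩ := hB.2 _ ((hhigh j h).mp hc)
        exact ⟨d, hd, by rw [hB'vtx, hDs j (by omega)]; exact hanc⟩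
  have hfinCq : {i | B.IsColliderAt i}.Finite :=
    (Set.finite_Iio B.len).subset (fun i hi => hi.2.1)
  have hJcase : B'.IsColliderAt J → ∃ jm, i0 < jm ∧ jm ≤ k ∧ B.IsColliderAt jm := by
    intro hc
    have hJL : J < L := by
      have := hc.2.1; rwa [hB'len] at this
    have hkn : k < B.len := by omega
    have hE1 : E (B.vtx (k+1)) (B.vtx k) := (hatJE hJL).mp hc
    by_cases hck : B.IsColliderAt k
    · exact ⟨k, hk1, le_rfl, hck⟩
    · by_contra hno
      push_neg at hno
      have hnc2 : ∀ j, i0 < j → j < k → ¬ B.IsColliderAt j :=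
        fun j h1 h2 hj => hno j h1 (by omega) hj
      have hE2 : E (B.vtx k) (B.vtx (k-1)) := by
        rcases B.adj (k-1) (by omega) with h | h
        · rw [show k - 1 + 1 = k by omega] at h
          exact absurd ⟨by omega, hkn, h, hE1⟩ hck
        · rwa [show k - 1 + 1 = k by omega] at h
      have hcyc1 := chain_back B hk1 hk2 hnc2 hE2
      have hcyc2 : Relation.TransGen E (B.vtx i0) (B.vtx k) := by
        rw [← hf0, ← hfk]
        exact walk_transGen hfadj 0 t' (by omega) ht'm
      exact dag_no_cycle hdag hcyc2 hcyc1
  obtain ⟨jm, hjm⟩ : ∃ jm, B'.IsColliderAt J → (i0 < jm ∧ jm ≤ k ∧ B.IsColliderAt jm) := by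
    by_cases hJC : B'.IsColliderAt J
    · obtain ⟨jm, h⟩ := hJcase hJC
      exact ⟨jm, fun _ => h⟩
    · exact ⟨0, fun h => absurd h hJC⟩
  set φ : ℕ → ℕ := fun j => if j < i0 then j else if j = J then jm else k + (j - J) with hφ
  have hregion : ∀ u, B'.IsColliderAt u → (u < i0 ∨ u = J ∨ J < u) := by
    intro u hu
    have huL : u < L := by
      have := hu.2.1; rwa [hB'len] at this
    rcases (by omega : u < i0 ∨ u = i0 ∨ (i0 < u ∧ u < J) ∨ u = J ∨ J < u)
      with h | h | h | h | h
    · exact Or.inl h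
    · rw [h] at hu; exact absurd hu hati0
    · exact absurd hu (hfpart u h.1 h.2)
    · exact Or.inr (Or.inl h)
    · exact Or.inr (Or.inr h)
  have hphlow : ∀ u, u < i0 → φ u = u := fun u hu => by simp [hφ, hu]
  have hphJ : φ J = jm := by simp [hφ, show ¬ J < i0 by omega]
  have hphhigh : ∀ u, J < u → φ u = k + (u - J) := fun u hu => by
    simp [hφ, show ¬ u < i0 by omega, show u ≠ J by omega]
  have hmaps : ∀ j ∈ {i | B'.IsColliderAt i}, φ j ∈ {i | B.IsColliderAt i} \ {i0} := by
    intro j hj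
    simp only [Set.mem_setOf_eq] at hj
    rcases hregion j hj with h | h | h
    · rw [Set.mem_diff, hphlow j h, Set.mem_singleton_iff]
      exact ⟨(hlow j h).mp hj, by omega⟩
    · subst h
      obtain ⟨h1, h2, h3⟩ := hjm hj
      rw [Set.mem_diff, hphJ, Set.mem_singleton_iff]
      exact ⟨h3, by omega⟩
    · rw [Set.mem_diff, hphhigh j h, Set.mem_singleton_iff]
      exact ⟨(hhigh j h).mp hj, by omega⟩
  have hinjφ : Set.InjOn φ {i | B'.IsColliderAt i} := by
    intro x hx y hy hxy
    simp only [Set.mem_setOf_eq] at hx hy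
    rcases hregion x hx with h1 | h1 | h1 <;> rcases hregion y hy with h2 | h2 | h2
    · rw [hphlow x h1, hphlow y h2] at hxy; exact hxy
    · subst h2
      obtain ⟨hb1, hb2, _⟩ := hjm hy
      rw [hphlow x h1, hphJ] at hxy; omega
    · rw [hphlow x h1, hphhigh y h2] at hxy; omega
    · subst h1
      obtain ⟨hb1, hb2, _⟩ := hjm hx
      rw [hphJ, hphlow y h2] at hxy; omega
    · omega
    · subst h1
      obtain ⟨hb1, hb2, _⟩ := hjm hx
      rw [hphJ, hphhigh y h2] at hxy; omega
    · rw [hphhigh x h1, hphlow y h2] at hxy; omega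
    · subst h2
      obtain ⟨hb1, hb2, _⟩ := hjm hy
      rw [hphhigh x h1, hphJ] at hxy; omega
    · rw [hphhigh x h1, hphhigh y h2] at hxy; omega
  refine ⟨B', hopen, ?_⟩
  have h1 : B'.numColliders ≤ ({i | B.IsColliderAt i} \ {i0}).ncard := by
    exact Set.ncard_le_ncard_of_injOn φ hmaps hinjφ (hfinCq.diff)
  have h2 : ({i | B.IsColliderAt i} \ {i0}).ncard < {i | B.IsColliderAt i}.ncard :=
    Set.ncard_diff_singleton_lt_of_mem hi0 hfinCq
  exact lt_of_le_of_lt h1 h2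

private lemma terminal_lemma (hdag : Irreflexive (Relation.TransGen E))
    {X Y z0 : V} {Z : Set V}
    (hz0 : z0 ∈ Z)
    (hadj2 : ∀ p : GPath E X Y, p.ProperFrom {X} → ¬ p.Causal → ¬ p.OpenGiven Z)
    (q : GPath E z0 Y)
    (hq : q.OpenGiven ((Z \ {z0}) ∪ {X}))
    {i0 : ℕ} (hi0 : q.IsColliderAt i0)
    (hbad : ∀ t, Anc E (q.vtx i0) t → t ∉ Z \ {z0})
    (hgood : ∀ j, i0 < j → q.IsColliderAt j → ∃ d ∈ Z \ {z0}, Anc E (q.vtx j) d)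
    {m : ℕ} {f : ℕ → V}
    (hf0 : f 0 = q.vtx i0) (hfm : f m = X)
    (hfadj : ∀ t < m, E (f t) (f (t+1)))
    (hfinj : ∀ s t, s ≤ m → t ≤ m → f s = f t → s = t)
    (hdisj : ∀ t, 1 ≤ t → t ≤ m → ∀ i ≤ q.len, f t ≠ q.vtx i) :
    False := by
  classical
  have hi0pos : 0 < i0 := hi0.1
  have hi0lt : i0 < q.len := hi0.2.1
  set R := m + (q.len - i0) with hR
  set A : ℕ → V := fun j => if j < m then f (m - j) else q.vtx (i0 + (j - m)) with hA
  have hA2 : ∀ j, m ≤ j → A j = q.vtx (i0 + (j - m)) := by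
    intro j hj
    simp [hA, show ¬ j < m by omega]
  have hA1 : ∀ j, j ≤ m → A j = f (m - j) := by
    intro j hj
    rcases Nat.eq_or_lt_of_le hj with h | h
    · rw [h, hA2 m le_rfl, show i0 + (m - m) = i0 by omega,
        show m - m = 0 by omega, hf0]
    · simp [hA, h]
  have hRpos : 0 < R := by omega
  have hfirstA : A 0 = X := by
    rw [hA1 0 (by omega), show m - 0 = m by omega, hfm]
  have hlastA : A R = Y := by
    rw [hA2 R (by omega), show i0 + (R - m) = q.len by omega, q.last]
  have hinjA : ∀ i j, i ≤ R → j ≤ R → A i = A j → i = j := by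
    intro i j hi hj hij
    rcases Nat.lt_or_ge i m with h1 | h1 <;> rcases Nat.lt_or_ge j m with h2 | h2
    · rw [hA1 i (by omega), hA1 j (by omega)] at hij
      have := hfinj (m - i) (m - j) (by omega) (by omega) hij
      omega
    · rw [hA1 i (by omega), hA2 j h2] at hij
      exact absurd hij (hdisj (m - i) (by omega) (by omega) _ (by omega))
    · rw [hA2 i h1, hA1 j (by omega)] at hij
      exact absurd hij.symm (hdisj (m - j) (by omega) (by omega) _ (by omega))
    · rw [hA2 i h1, hA2 j h2] at hij
      have := q.inj _ _ (by omega) (by omega) hij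
      omega
  have hadjA : ∀ j, j < R → E (A j) (A (j+1)) ∨ E (A (j+1)) (A j) := by
    intro j hjR
    rcases Nat.lt_or_ge j m with h | h
    · rw [hA1 j (by omega), hA1 (j+1) (by omega)]
      right
      have := hfadj (m - (j+1)) (by omega)
      rwa [show m - (j+1) + 1 = m - j by omega] at this
    · rw [hA2 j h, hA2 (j+1) (by omega),
        show i0 + (j+1-m) = i0 + (j - m) + 1 by omega]
      exact q.adj _ (by omega)
  set r : GPath E X Y := ⟨R, hRpos, A, hfirstA, hlastA, hinjA, hadjA⟩ with hr
  have hrlen : r.len = R := rfl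
  have hrvtx : ∀ j, r.vtx j = A j := fun _ => rfl
  have hcolE : ∀ j, r.IsColliderAt j ↔
      (0 < j ∧ j < R ∧ E (A (j-1)) (A j) ∧ E (A (j+1)) (A j)) := fun j => Iff.rfl
  have hstat : ∀ i, m < i → (r.IsColliderAt i ↔ q.IsColliderAt (i0 + (i - m))) := by
    intro i hi
    rw [hcolE]
    unfold GPath.IsColliderAt
    rw [hA2 (i-1) (by omega), hA2 i (by omega), hA2 (i+1) (by omega),
        show i0 + (i-1-m) = i0 + (i - m) - 1 by omega,
        show i0 + (i+1-m) = i0 + (i - m) + 1 by omega]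
    constructor
    · rintro ⟨a1,a2,a3,a4⟩; exact ⟨by omega, by omega, a3, a4⟩
    · rintro ⟨a1,a2,a3,a4⟩; exact ⟨by omega, by omega, a3, a4⟩
  have hlowc : ∀ i, 0 < i → i ≤ m → ¬ r.IsColliderAt i := by
    intro i h0 hm hc
    rw [hcolE] at hc
    have h3 := hc.2.2.1
    rw [hA1 (i-1) (by omega), hA1 i (by omega),
      show m - (i-1) = m - i + 1 by omega] at h3
    exact dag_asymm hdag (hfadj (m - i) (by omega)) h3
  have hproper : r.ProperFrom {X} := by
    intro i h0 hiR hmem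
    have hx : r.vtx i = X := hmem
    rw [hrvtx] at hx
    rcases le_or_gt i m with h | h
    · rw [hA1 i h] at hx
      rw [← hfm] at hx
      have := hfinj (m - i) m (by omega) le_rfl hx
      omega
    · rw [hA2 i (by omega)] at hx
      rcases Nat.eq_zero_or_pos m with hm0 | hm0
      · have h6 : f 0 = X := hm0 ▸ hfm
        have h5 : q.vtx (i0 + (i - m)) = q.vtx i0 := by
          rw [hx, ← h6]; exact hf0
        have := q.inj (i0 + (i - m)) i0 (by omega) (by omega) h5
        omega
      · exact hdisj m hm0 le_rfl _ (by omega) (hfm.trans hx.symm)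
  have hncaus : ¬ r.Causal := by
    intro hc
    have h1 := hc 0 (by omega)
    rw [hrvtx, hrvtx] at h1
    rcases Nat.eq_zero_or_pos m with hm0 | hm0
    · rw [hA1 0 (by omega), hA2 1 (by omega), hm0] at h1
      rw [show (0:ℕ) - 0 = 0 from rfl, hf0, show i0 + (1 - 0) = i0 + 1 by omega] at h1
      exact dag_asymm hdag h1 hi0.2.2.2
    · rw [hA1 0 (by omega), hA1 1 (by omega), show m - 0 = m by omega] at h1
      have h2 := hfadj (m - 1) (by omega)
      rw [show m - 1 + 1 = m by omega] at h2
      exact dag_asymm hdag h1 h2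
  have hopenZ : r.OpenGiven Z := by
    constructor
    · intro i h0 hiR hnc
      rw [hrlen] at hiR
      rw [hrvtx]
      rcases Nat.lt_or_ge i m with h | h
      · rw [hA1 i (by omega)]
        intro hmem
        have hz : f (m - i) ≠ z0 := by
          intro hz
          exact hdisj (m - i) (by omega) (by omega) 0 (by omega) (by rw [hz, q.first])
        have : f (m - i) ∈ Z \ {z0} := ⟨hmem, hz⟩
        exact hbad _ (by rw [← hf0]; exact walk_anc hfadj 0 (m - i) (by omega) (by omega)) this
      · rcases Nat.eq_or_lt_of_le h with h2 | h2
        · rw [hA1 i (by omega), show m - i = 0 by omega, hf0]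
          intro hmem
          have hz : q.vtx i0 ≠ z0 := by
            intro hz
            have hz2 : q.vtx i0 = q.vtx 0 := by rw [q.first]; exact hz
            have := q.inj i0 0 (by omega) (by omega) hz2
            omega
          exact hbad _ Relation.ReflTransGen.refl ⟨hmem, hz⟩
        · rw [hA2 i (by omega)]
          intro hmem
          have hnotc : ¬ q.IsColliderAt (i0 + (i - m)) := fun hcq => hnc ((hstat i h2).mpr hcq)
          have h3 := hq.1 (i0 + (i - m)) (by omega) (by omega) hnotc
          have hz : q.vtx (i0 + (i - m)) ≠ z0 := by
            intro hz
            have hz2 : q.vtx (i0 + (i - m)) = q.vtx 0 := by rw [q.first]; exact hz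
            have := q.inj _ 0 (by omega) (by omega) hz2
            omega
          exact h3 (Or.inl ⟨hmem, hz⟩)
    · intro i hc
      have h0 : 0 < i := hc.1
      have hiR : i < R := by
        have := hc.2.1; rwa [hrlen] at this
      rcases le_or_gt i m with h | h
      · exact absurd hc (hlowc i h0 h)
      · obtain ⟨d, hd, hanc⟩ := hgood (i0 + (i - m)) (by omega) ((hstat i h).mp hc)
        exact ⟨d, hd.1, by rw [hrvtx, hA2 i (by omega)]; exact hanc⟩
  exact hadj2 r hproper hncaus hopenZ

end Splice

/-- If `Z` satisfies the adjustment criterion relative to `({X}, {Y})`, `X` is not an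
ancestor of any vertex of `Z`, `z₀ ∈ Z`, and `q` is a path from `z₀` to `Y` that is open
given `(Z \ {z₀}) ∪ {X}` with the fewest colliders among all such paths, then `q` is
open given `Z \ {z₀}`. -/
theorem stmt_14 [Fintype V] (E : V → V → Prop)
    (hdag : Irreflexive (Relation.TransGen E))
    (X Y : V) (hXY : X ≠ Y)
    (Z : Set V) (hZsub : Z ⊆ ({X, Y} : Set V)ᶜ)
    (hadj : AdjustmentCriterion E {X} {Y} Z)
    (hanc : ∀ z ∈ Z, ¬ Anc E X z)
    (z0 : V) (hz0 : z0 ∈ Z)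
    (q : GPath E z0 Y) (hq : q.OpenGiven ((Z \ {z0}) ∪ {X}))
    (hmin : ∀ q' : GPath E z0 Y, q'.OpenGiven ((Z \ {z0}) ∪ {X}) →
      q.numColliders ≤ q'.numColliders) :
    q.OpenGiven (Z \ {z0}) := by
  classical
  constructor
  · intro i h0 hl hnc hmem
    exact hq.1 i h0 hl hnc (Or.inl hmem)
  · intro i hcol
    by_contra hno
    set Bad : Finset ℕ := (Finset.range (q.len + 1)).filter
      (fun j => q.IsColliderAt j ∧ ¬ ∃ d ∈ Z \ {z0}, Anc E (q.vtx j) d) with hBad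
    have hmemBad : i ∈ Bad := by
      rw [hBad, Finset.mem_filter, Finset.mem_range]
      exact ⟨by have := hcol.2.1; omega, hcol, hno⟩
    have hne : Bad.Nonempty := ⟨i, hmemBad⟩
    set i0 := Bad.max' hne with hi0def
    have hi0mem := Bad.max'_mem hne
    obtain ⟨hi0col, hi0bad⟩ := (Finset.mem_filter.mp hi0mem).2
    have hmax : ∀ j, q.IsColliderAt j → ¬ (∃ d ∈ Z \ {z0}, Anc E (q.vtx j) d) → j ≤ i0 := by
      intro j hj1 hj2
      apply Finset.le_max'
      exact Finset.mem_filter.mpr ⟨Finset.mem_range.mpr (by have := hj1.2.1; omega), hj1, hj2⟩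
    obtain ⟨d, hd, hancd⟩ := hq.2 i0 hi0col
    have hAncX : Anc E (q.vtx i0) X := by
      rcases hd with hd | hd
      · exact absurd ⟨d, hd, hancd⟩ hi0bad
      · rw [Set.mem_singleton_iff] at hd
        rwa [hd] at hancd
    obtain ⟨m, f, hf0, hfm, hfadj, hfinj⟩ := exists_inj_walk hAncX
    have hbad' : ∀ t, Anc E (q.vtx i0) t → t ∉ Z \ {z0} := by
      intro t hAnc hmem
      exact hi0bad ⟨t, hmem, hAnc⟩
    have hSdesc : ∀ t ≤ m, f t ∉ Z \ {z0} := by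
      intro t ht
      apply hbad'
      rw [← hf0]
      exact walk_anc hfadj 0 t (by omega) ht
    by_cases hT : ∃ t, 1 ≤ t ∧ t ≤ m ∧ ∃ i', i' ≤ q.len ∧ f t = q.vtx i'
    · set t' := Nat.find hT with ht'def
      obtain ⟨ht'1, ht'm, k, hk, hfk⟩ := Nat.find_spec hT
      have hmin' : ∀ j, 0 < j → j < t' → ∀ i' ≤ q.len, f j ≠ q.vtx i' := by
        intro j h1 h2 i' hi' hne'
        exact Nat.find_min hT h2 ⟨h1, by omega, i', hi', hne'⟩
      have hm1 : 1 ≤ m := le_trans ht'1 ht'm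
      have hki0 : k ≠ i0 := by
        intro h
        rw [h, ← hf0] at hfk
        have := hfinj t' 0 ht'm (by omega) hfk
        omega
      rcases Nat.lt_or_ge i0 k with hik | hik
      · obtain ⟨q', hopen', hlt'⟩ := splice_lemma hdag q hq hi0col hm1 hf0 hfm hfadj hfinj
          ht'1 ht'm hik hk hfk hmin' hSdesc
        have := hmin q' hopen'
        omega
      · have hik' : k < i0 := by omega
        have hi0len : i0 < q.len := hi0col.2.1
        have hBopen : q.rev.OpenGiven ((Z \ {z0}) ∪ {X}) := q.rev_openGiven _ hq
        have hi0colR : q.rev.IsColliderAt (q.len - i0) := by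
          apply (q.rev_collider_iff (q.len - i0)).mpr
          rw [show q.len - (q.len - i0) = i0 by omega]
          exact hi0col
        have hf0R : f 0 = q.rev.vtx (q.len - i0) := by
          rw [q.rev_vtx, show q.len - (q.len - i0) = i0 by omega]
          exact hf0
        have hfkR : f t' = q.rev.vtx (q.len - k) := by
          rw [q.rev_vtx, show q.len - (q.len - k) = k by omega]
          exact hfk
        have hikR : q.len - i0 < q.len - k := by omega
        have hkR2 : q.len - k ≤ q.rev.len := by rw [q.rev_len]; omega
        have hminR : ∀ j, 0 < j → j < t' → ∀ i' ≤ q.rev.len, f j ≠ q.rev.vtx i' := by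
          intro j h1 h2 i' hi'
          rw [q.rev_vtx]
          exact hmin' j h1 h2 _ (by omega)
        obtain ⟨B', hopen', hlt'⟩ := splice_lemma hdag q.rev hBopen hi0colR hm1 hf0R hfm
          hfadj hfinj ht'1 ht'm hikR hkR2 hfkR hminR hSdesc
        have hfin : q.numColliders ≤ B'.rev.numColliders :=
          hmin B'.rev (B'.rev_openGiven _ hopen')
        rw [B'.rev_numColliders] at hfin
        rw [q.rev_numColliders] at hlt'
        omega
    · push_neg at hT
      have hgood : ∀ j, i0 < j → q.IsColliderAt j → ∃ d ∈ Z \ {z0}, Anc E (q.vtx j) d := by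
        intro j hj hcolj
        by_contra hnog
        have := hmax j hcolj hnog
        omega
      exact terminal_lemma hdag hz0 (hadj.2 X rfl Y rfl) q hq hi0col hbad' hgood
        hf0 hfm hfadj hfinj hT
end
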